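/- arXiv:2501.16218 — 3 statements merged into one kernel-verified Lean document; each statement's English description precedes it below -/
import Mathlib

section
/- Let λ0, λ1 > 0 with λ0 ≠ λ1, and let s ∈ (0,1) be a point at which the derivative in s of s·λ0 + (1−s)·λ1 − λ0^s λ1^{1−s} vanishes. Set μ := λ0^s λ1^{1−s}. Then the Kullback–Leibler divergences between Poisson distributions satisfy D(Poi(μ)‖Poi(λ0)) = D(Poi(μ)‖Poi(λ1)) = s·λ0 + (1−s)·λ1 − λ0^s λ1^{1−s}, where D(Poi(μ)‖Poi(λ)) = λ − μ + μ·log(μ/λ). -/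
/-- At a stationary point `s ∈ (0,1)` of the Chernoff `s`-divergence between Poisson
distributions with distinct rates `l0 ≠ l1`, setting `μ := l0^s * l1^(1-s)`, the
Kullback–Leibler divergences `D(Poi(μ)‖Poi(l0))` and `D(Poi(μ)‖Poi(l1))` (given by
`λ - μ + μ·log(μ/λ)`) both equal the Chernoff `s`-divergence
`s*l0 + (1-s)*l1 - l0^s*l1^(1-s)`. -/
theorem kl_at_chernoff_stationary_point (l0 l1 s : ℝ) (h0 : 0 < l0) (h1 : 0 < l1)
    (hne : l0 ≠ l1) (hs : s ∈ Set.Ioo (0 : ℝ) 1)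
    (hderiv : HasDerivAt (fun t : ℝ => t * l0 + (1 - t) * l1 - l0 ^ t * l1 ^ (1 - t)) 0 s) :
    l0 - l0 ^ s * l1 ^ (1 - s) +
        (l0 ^ s * l1 ^ (1 - s)) * Real.log ((l0 ^ s * l1 ^ (1 - s)) / l0)
      = s * l0 + (1 - s) * l1 - l0 ^ s * l1 ^ (1 - s) ∧
    l1 - l0 ^ s * l1 ^ (1 - s) +
        (l0 ^ s * l1 ^ (1 - s)) * Real.log ((l0 ^ s * l1 ^ (1 - s)) / l1)
      = s * l0 + (1 - s) * l1 - l0 ^ s * l1 ^ (1 - s) := by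
  set μ := l0 ^ s * l1 ^ (1 - s) with hμ
  -- compute the derivative independently
  have d0 : HasDerivAt (fun t : ℝ => l0 ^ t) (l0 ^ s * Real.log l0) s :=
    (Real.hasStrictDerivAt_const_rpow h0 s).hasDerivAt
  have d1 : HasDerivAt (fun t : ℝ => l1 ^ (1 - t))
      (l1 ^ (1 - s) * Real.log l1 * (-1)) s := by
    have : HasDerivAt (fun t : ℝ => (1 : ℝ) - t) (-1) s := by
      simpa [Pi.sub_def] using (hasDerivAt_const s (1:ℝ)).sub (hasDerivAt_id s)
    exact ((Real.hasStrictDerivAt_const_rpow h1 (1 - s)).hasDerivAt).comp s this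
  have dlin : HasDerivAt (fun t : ℝ => t * l0 + (1 - t) * l1) (l0 - l1) s := by
    have := ((hasDerivAt_id s).mul_const l0).add
      (((hasDerivAt_const s (1:ℝ)).sub (hasDerivAt_id s)).mul_const l1)
    simpa [Pi.add_def, sub_eq_add_neg] using this
  have dprod : HasDerivAt (fun t : ℝ => l0 ^ t * l1 ^ (1 - t))
      (l0 ^ s * Real.log l0 * l1 ^ (1 - s) + l0 ^ s * (l1 ^ (1 - s) * Real.log l1 * (-1))) s :=
    d0.mul d1
  have dall := dlin.sub dprod
  have hkey : l0 - l1 - (l0 ^ s * Real.log l0 * l1 ^ (1 - s)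
      + l0 ^ s * (l1 ^ (1 - s) * Real.log l1 * (-1))) = 0 :=
    dall.unique hderiv
  have hkey' : μ * (Real.log l0 - Real.log l1) = l0 - l1 := by
    rw [hμ]; nlinarith [hkey]
  have hμpos : 0 < μ := mul_pos (Real.rpow_pos_of_pos h0 s) (Real.rpow_pos_of_pos h1 _)
  have hlogμ : Real.log μ = s * Real.log l0 + (1 - s) * Real.log l1 := by
    rw [hμ, Real.log_mul (by positivity) (by positivity),
      Real.log_rpow h0, Real.log_rpow h1]
  constructor
  · rw [Real.log_div hμpos.ne' h0.ne', hlogμ]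
    linear_combination (s - 1) * hkey'
  · rw [Real.log_div hμpos.ne' h1.ne', hlogμ]
    linear_combination s * hkey'
end

section
/- The function S(R) := log((R−1)/log R)/log R is strictly increasing on the interval (0,1), satisfies lim_{R→0+} S(R) = 0 and lim_{R→1−} S(R) = 1/2, and consequently S(R) ∈ (0, 1/2) for every R ∈ (0,1). -/
open Real Filter Set Topology

lemma cS_sinh {x : ℝ} (hx : 0 < x) : 2 * x < Real.exp x - Real.exp (-x) := by
  have h : 1 + x + x ^ 2 / 2 ≤ Real.exp x := by
    have := Real.sum_le_exp_of_nonneg hx.le 3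
    simp [Finset.sum_range_succ] at this
    nlinarith [this]
  have hpos : 0 < Real.exp x := Real.exp_pos x
  have hinv : Real.exp x * Real.exp (-x) = 1 := by
    rw [← Real.exp_add]; simp
  nlinarith [mul_nonneg (sub_nonneg.2 h)
      (show (0:ℝ) ≤ Real.exp x + (1 + x + x^2/2) - 2*x by nlinarith),
    hinv, pow_pos hx 4, mul_pos hpos hpos]

lemma cS_exp_sub_one_pos {t : ℝ} (ht : 0 < t) : 0 < Real.exp t - 1 := by
  have := Real.add_one_lt_exp (ne_of_gt ht)
  linarith

lemma cS_sq_lt {t : ℝ} (ht : 0 < t) : t ^ 2 * Real.exp t < (Real.exp t - 1) ^ 2 := by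
  have h1 := cS_sinh (show 0 < t / 2 by linarith)
  have hE : Real.exp (t/2) * Real.exp (t/2) = Real.exp t := by
    rw [← Real.exp_add]; ring_nf
  have hpos : 0 < Real.exp (t/2) := Real.exp_pos _
  have hkey : t * Real.exp (t/2) < Real.exp t - 1 := by
    have hinv : Real.exp (t/2) * Real.exp (-(t/2)) = 1 := by
      rw [← Real.exp_add]; simp
    nlinarith [mul_pos hpos hpos]
  have h2 : 0 < t * Real.exp (t/2) := by positivity
  nlinarith [hkey, h2, cS_exp_sub_one_pos ht]

/-- inner function `g(t) = log t - log(1 - e^{-t})`. -/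
noncomputable def cGlog (t : ℝ) : ℝ := Real.log t - Real.log (1 - Real.exp (-t))

/-- `f(t) = g(t)/t`, equal to `chernoffS (e^{-t})`. -/
noncomputable def cF (t : ℝ) : ℝ := cGlog t / t

/-- `G(t) = g(t) - 1 + t/(e^t - 1)`. -/
noncomputable def cG (t : ℝ) : ℝ := cGlog t - 1 + t / (Real.exp t - 1)

lemma cS_one_sub_exp_pos {t : ℝ} (ht : 0 < t) : 0 < 1 - Real.exp (-t) := by
  have : Real.exp (-t) < 1 := Real.exp_lt_one_iff.mpr (by linarith)
  linarith

lemma hasDerivAt_cGlog {t : ℝ} (ht : 0 < t) :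
    HasDerivAt cGlog (1 / t - 1 / (Real.exp t - 1)) t := by
  have h2 : HasDerivAt (fun s : ℝ => 1 - Real.exp (-s)) (Real.exp (-t)) t := by
    have h := ((Real.hasDerivAt_exp (-t)).comp t (hasDerivAt_neg t)).const_sub 1
    simpa using h
  have hpos := cS_one_sub_exp_pos ht
  have h3 : HasDerivAt (fun s : ℝ => Real.log (1 - Real.exp (-s)))
      ((1 - Real.exp (-t))⁻¹ * Real.exp (-t)) t := by
    simpa [Function.comp_def] using (Real.hasDerivAt_log hpos.ne').comp t h2
  have h1 : HasDerivAt Real.log t⁻¹ t := Real.hasDerivAt_log (ne_of_gt ht)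
  have := h1.sub h3
  convert this using 1
  · rfl
  · rfl
  · rfl
  have he : Real.exp (-t) = (Real.exp t)⁻¹ := Real.exp_neg t
  have hE : (0:ℝ) < Real.exp t := Real.exp_pos t
  have hE1 := cS_exp_sub_one_pos ht
  rw [he]
  field_simp

lemma hasDerivAt_cG {t : ℝ} (ht : 0 < t) :
    HasDerivAt cG (1 / t - t * Real.exp t / (Real.exp t - 1) ^ 2) t := by
  have hE1 := cS_exp_sub_one_pos ht
  have hdiv : HasDerivAt (fun s : ℝ => s / (Real.exp s - 1))
      ((1 * (Real.exp t - 1) - t * Real.exp t) / (Real.exp t - 1) ^ 2) t :=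
    (hasDerivAt_id t).div ((Real.hasDerivAt_exp t).sub_const 1) hE1.ne'
  have h := ((hasDerivAt_cGlog ht).sub_const 1).add hdiv
  convert h using 1
  · rfl
  · rfl
  · rfl
  field_simp
  ring

lemma cG_deriv_pos {t : ℝ} (ht : 0 < t) :
    0 < 1 / t - t * Real.exp t / (Real.exp t - 1) ^ 2 := by
  have hE1 := cS_exp_sub_one_pos ht
  have h := cS_sq_lt ht
  rw [sub_pos, div_lt_div_iff₀ (by positivity) ht]
  nlinarith

lemma cG_contOn : ContinuousOn cG (Set.Ioi (0:ℝ)) := fun t ht =>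
  ((hasDerivAt_cG ht).differentiableAt.continuousAt).continuousWithinAt

lemma cG_strictMono : StrictMonoOn cG (Set.Ioi (0:ℝ)) := by
  apply strictMonoOn_of_deriv_pos (convex_Ioi 0) cG_contOn
  intro t ht
  rw [interior_Ioi] at ht
  rw [(hasDerivAt_cG ht).deriv]
  exact cG_deriv_pos ht

lemma cS_tendsto_expslope :
    Filter.Tendsto (fun t => (Real.exp t - 1) / t) (nhdsWithin 0 (Set.Ioi (0:ℝ))) (nhds 1) := by
  have h : HasDerivAt Real.exp 1 0 := by simpa using Real.hasDerivAt_exp 0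
  have := hasDerivAt_iff_tendsto_slope.mp h
  have h2 := this.mono_left (nhdsWithin_mono 0 (fun x hx => ne_of_gt hx))
  refine h2.congr' ?_
  filter_upwards [self_mem_nhdsWithin] with t ht
  simp [slope_def_field, ht]

lemma cS_tendsto_u :
    Filter.Tendsto (fun t => (1 - Real.exp (-t)) / t) (nhdsWithin 0 (Set.Ioi (0:ℝ))) (nhds 1) := by
  have h : HasDerivAt (fun s : ℝ => -Real.exp (-s)) 1 0 := by
    have := ((Real.hasDerivAt_exp (-0)).comp 0 (hasDerivAt_neg 0)).neg
    simpa [Function.comp_def, Pi.neg_def] using this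
  have := hasDerivAt_iff_tendsto_slope.mp h
  have h2 := this.mono_left (nhdsWithin_mono 0 (fun x hx => ne_of_gt hx))
  refine h2.congr' ?_
  filter_upwards [self_mem_nhdsWithin] with t ht
  simp [slope_def_field]
  ring

lemma cS_tendsto_B :
    Filter.Tendsto (fun t => t / (Real.exp t - 1)) (nhdsWithin 0 (Set.Ioi (0:ℝ))) (nhds 1) := by
  have := (cS_tendsto_expslope.inv₀ one_ne_zero)
  simp only [inv_div, inv_one] at this
  exact this

lemma cS_tendsto_glog :
    Filter.Tendsto cGlog (nhdsWithin 0 (Set.Ioi (0:ℝ))) (nhds 0) := by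
  have hlog : Filter.Tendsto (fun t => Real.log ((1 - Real.exp (-t)) / t))
      (nhdsWithin 0 (Set.Ioi (0:ℝ))) (nhds 0) := by
    have hc : ContinuousAt Real.log 1 := Real.continuousAt_log one_ne_zero
    have := hc.tendsto.comp cS_tendsto_u
    simpa [Function.comp_def] using this
  have := hlog.neg
  simp only [neg_zero] at this
  refine this.congr' ?_
  filter_upwards [self_mem_nhdsWithin] with t ht
  rw [Set.mem_Ioi] at ht
  have h1 := cS_one_sub_exp_pos ht
  rw [Real.log_div h1.ne' (ne_of_gt ht)]
  simp [cGlog]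

lemma cS_tendsto_cG :
    Filter.Tendsto cG (nhdsWithin 0 (Set.Ioi (0:ℝ))) (nhds 0) := by
  have := (cS_tendsto_glog.sub_const 1).add cS_tendsto_B
  simpa [cG.eq_unfold] using this

lemma cG_pos {t : ℝ} (ht : 0 < t) : 0 < cG t := by
  have h1 : cG (t/2) ≤ cG t := le_of_lt (cG_strictMono (by simp; linarith) (by simpa using ht) (by linarith))
  have h0 : (0:ℝ) ≤ cG (t/2) := by
    refine le_of_tendsto cS_tendsto_cG ?_
    filter_upwards [Ioo_mem_nhdsGT_of_mem (by constructor <;> linarith : (0:ℝ) ∈ Set.Ico 0 (t/2))] with s hs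
    exact le_of_lt (cG_strictMono hs.1 (by simp; linarith) hs.2)
  -- strictness
  have h2 : cG (t/2) < cG t := cG_strictMono (by simp; linarith) (by simpa using ht) (by linarith)
  linarith

lemma hasDerivAt_cF {t : ℝ} (ht : 0 < t) : HasDerivAt cF (-cG t / t ^ 2) t := by
  have h := (hasDerivAt_cGlog ht).div (hasDerivAt_id t) (ne_of_gt ht)
  convert h using 1
  · rfl
  · rfl
  · rfl
  have hE1 := cS_exp_sub_one_pos ht
  simp only [cG, id]
  field_simp
  ring

lemma cF_contOn : ContinuousOn cF (Set.Ioi (0:ℝ)) := fun t ht =>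
  ((hasDerivAt_cF ht).differentiableAt.continuousAt).continuousWithinAt

lemma cF_strictAnti : StrictAntiOn cF (Set.Ioi (0:ℝ)) := by
  apply strictAntiOn_of_deriv_neg (convex_Ioi 0) cF_contOn
  intro t ht
  rw [interior_Ioi] at ht
  rw [(hasDerivAt_cF ht).deriv]
  have := cG_pos ht
  have h2 : (0:ℝ) < t^2 := pow_pos ht 2
  exact div_neg_of_neg_of_pos (by linarith) h2

lemma cS_u_lt_one {t : ℝ} (ht : 0 < t) : (1 - Real.exp (-t)) / t < 1 := by
  have h := Real.add_one_lt_exp (show (-t) ≠ 0 by linarith)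
  rw [div_lt_one ht]
  linarith

lemma cS_tendsto_u_ne :
    Filter.Tendsto (fun t => (1 - Real.exp (-t)) / t) (nhdsWithin 0 (Set.Ioi (0:ℝ)))
      (nhdsWithin 1 {x : ℝ | x ≠ 1}) := by
  rw [tendsto_nhdsWithin_iff]
  refine ⟨cS_tendsto_u, ?_⟩
  filter_upwards [self_mem_nhdsWithin] with t ht
  exact ne_of_lt (cS_u_lt_one ht)

lemma cS_tendsto_logslope :
    Filter.Tendsto (fun t => Real.log ((1 - Real.exp (-t)) / t) / ((1 - Real.exp (-t)) / t - 1))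
      (nhdsWithin 0 (Set.Ioi (0:ℝ))) (nhds 1) := by
  have h : HasDerivAt Real.log 1 1 := by simpa using Real.hasDerivAt_log one_ne_zero
  have hs := hasDerivAt_iff_tendsto_slope.mp h
  have := hs.comp cS_tendsto_u_ne
  refine this.congr ?_
  intro t
  simp [slope_def_field]

lemma cS_tendsto_quad :
    Filter.Tendsto (fun t => ((1 - Real.exp (-t)) / t - 1) / t)
      (nhdsWithin 0 (Set.Ioi (0:ℝ))) (nhds (-(1/2))) := by
  have key : Filter.Tendsto (fun t => ((1 - Real.exp (-t)) / t - 1) / t + 1/2)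
      (nhdsWithin 0 (Set.Ioi (0:ℝ))) (nhds 0) := by
    refine squeeze_zero_norm' (a := fun t => 2/9 * t) ?_ ?_
    · filter_upwards [Ioo_mem_nhdsGT_of_mem
        (by constructor <;> norm_num : (0:ℝ) ∈ Set.Ico 0 1)] with t ht
      obtain ⟨ht0, ht1⟩ := ht
      have hb := Real.exp_bound (x := -t) (by rw [abs_of_nonpos (by linarith)]; linarith)
        (n := 3) (by norm_num)
      have hsum : ∑ m ∈ Finset.range 3, (-t) ^ m / (m.factorial : ℝ)
          = 1 - t + t^2/2 := by
        simp [Finset.sum_range_succ]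
        ring
      have habs : |(-t)| = t := by rw [abs_of_nonpos (by linarith)]; ring
      rw [hsum, habs] at hb
      have heq : ((1 - Real.exp (-t)) / t - 1) / t + 1/2
          = -(Real.exp (-t) - (1 - t + t^2/2)) / t^2 := by
        field_simp
        ring
      rw [heq, norm_div, norm_neg]
      have ht2 : (0:ℝ) < t^2 := by positivity
      have hb2 : |Real.exp (-t) - (1 - t + t^2/2)| ≤ t^3 * (4/(6*3)) := by
        simpa [Nat.factorial] using hb
      rw [Real.norm_eq_abs, Real.norm_eq_abs, abs_of_pos ht2, div_le_iff₀ ht2]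
      calc |Real.exp (-t) - (1 - t + t^2/2)| ≤ t^3 * (4/(6*3)) := hb2
        _ ≤ 2/9 * t * t^2 := by nlinarith
    · have : Filter.Tendsto (fun t : ℝ => 2/9 * t) (nhdsWithin 0 (Set.Ioi (0:ℝ)))
          (nhds (2/9 * 0)) :=
        (tendsto_id.const_mul _).mono_left nhdsWithin_le_nhds
      simpa using this
  have h2 := key.sub_const (1/2)
  simp only [add_sub_cancel_right] at h2
  convert h2 using 2
  norm_num

lemma cF_tendsto_half :
    Filter.Tendsto cF (nhdsWithin 0 (Set.Ioi (0:ℝ))) (nhds (1/2)) := by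
  have h := (cS_tendsto_logslope.mul cS_tendsto_quad).neg
  have hval : -(1 * -(1/2)) = (1/2 : ℝ) := by norm_num
  rw [hval] at h
  refine h.congr' ?_
  filter_upwards [self_mem_nhdsWithin] with t ht
  rw [Set.mem_Ioi] at ht
  have h1 := cS_one_sub_exp_pos ht
  have hu1 : (1 - Real.exp (-t)) / t - 1 ≠ 0 := by
    have := cS_u_lt_one ht
    intro h; apply absurd this; rw [sub_eq_zero] at h; simp [h]
  have hlogu : Real.log ((1 - Real.exp (-t)) / t) = Real.log (1 - Real.exp (-t)) - Real.log t :=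
    Real.log_div h1.ne' (ne_of_gt ht)
  simp only [cF, cGlog]
  have hcancel : Real.log ((1 - Real.exp (-t))/t) / ((1 - Real.exp (-t))/t - 1)
      * (((1 - Real.exp (-t))/t - 1)/t) = Real.log ((1 - Real.exp (-t))/t) / t := by
    rw [div_mul_div_comm, mul_comm (Real.log _) _, mul_div_mul_left _ _ hu1]
  rw [hcancel, hlogu]
  ring

lemma cF_tendsto_zero :
    Filter.Tendsto cF Filter.atTop (nhds 0) := by
  have h1 : Filter.Tendsto (fun t : ℝ => Real.log t / t) Filter.atTop (nhds 0) := by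
    have := Real.tendsto_pow_log_div_mul_add_atTop 1 0 1 one_ne_zero
    simpa using this
  have h2 : Filter.Tendsto (fun t : ℝ => Real.log (1 - Real.exp (-t)) / t)
      Filter.atTop (nhds 0) := by
    have hexp : Filter.Tendsto (fun t : ℝ => 1 - Real.exp (-t)) Filter.atTop (nhds 1) := by
      have := Real.tendsto_exp_atBot.comp tendsto_neg_atTop_atBot
      have h := this.const_sub 1
      simpa using h
    have hlog : Filter.Tendsto (fun t : ℝ => Real.log (1 - Real.exp (-t)))
        Filter.atTop (nhds 0) := by
      have := (Real.continuousAt_log one_ne_zero).tendsto.comp hexp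
      simpa [Function.comp_def] using this
    have := hlog.mul tendsto_inv_atTop_zero
    simpa [div_eq_mul_inv] using this
  have := h1.sub h2
  simp only [sub_zero] at this
  refine this.congr ?_
  intro t
  simp [cF, cGlog, sub_div]

lemma cF_pos {t : ℝ} (ht : 0 < t) : 0 < cF t := by
  have h1 : cF (t + 1) < cF t := cF_strictAnti (by simpa using ht) (by simp; linarith) (by linarith)
  have h0 : (0:ℝ) ≤ cF (t + 1) := by
    refine le_of_tendsto cF_tendsto_zero ?_
    filter_upwards [Filter.eventually_gt_atTop (t + 1)] with s hs
    exact le_of_lt (cF_strictAnti (by simp; linarith) (by simp; linarith [hs.trans_le' (by linarith : t+1 ≤ t+1)]) hs)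
  linarith

lemma cF_lt_half {t : ℝ} (ht : 0 < t) : cF t < 1/2 := by
  have h1 : cF t < cF (t/2) := cF_strictAnti (by simp; linarith) (by simpa using ht) (by linarith)
  have h0 : cF (t/2) ≤ 1/2 := by
    refine ge_of_tendsto cF_tendsto_half ?_
    filter_upwards [Ioo_mem_nhdsGT_of_mem
      (by constructor <;> linarith : (0:ℝ) ∈ Set.Ico 0 (t/2))] with s hs
    exact le_of_lt (cF_strictAnti hs.1 (by simp; linarith) hs.2)
  linarith

/-- The function `S(R) = log((R-1)/log R)/log R` on `(0,1)`. -/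
noncomputable def chernoffS (R : ℝ) : ℝ :=
  Real.log ((R - 1) / Real.log R) / Real.log R

lemma chernoffS_eq {R : ℝ} (hR0 : 0 < R) (hR1 : R < 1) :
    chernoffS R = cF (-Real.log R) := by
  have hlog : Real.log R < 0 := Real.log_neg hR0 hR1
  have ht : 0 < -Real.log R := by linarith
  have hexp : Real.exp (-(-Real.log R)) = R := by rw [neg_neg, Real.exp_log hR0]
  unfold chernoffS cF cGlog
  rw [hexp]
  have h1R : (0:ℝ) < 1 - R := by linarith
  have hq : (R - 1)/Real.log R = (1 - R)/(-Real.log R) := by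
    rw [show (1 - R) = -(R - 1) by ring, neg_div_neg_eq]
  rw [hq, Real.log_div h1R.ne' (ne_of_gt ht)]
  ring

lemma cS_neg_log_tendsto_atTop :
    Filter.Tendsto (fun R : ℝ => -Real.log R) (nhdsWithin 0 (Set.Ioi (0:ℝ))) Filter.atTop :=
  tendsto_neg_atBot_atTop.comp Real.tendsto_log_nhdsGT_zero

lemma cS_neg_log_tendsto_one :
    Filter.Tendsto (fun R : ℝ => -Real.log R) (nhdsWithin 1 (Set.Iio (1:ℝ)))
      (nhdsWithin 0 (Set.Ioi (0:ℝ))) := by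
  rw [tendsto_nhdsWithin_iff]
  constructor
  · have h : Filter.Tendsto (fun R : ℝ => -Real.log R) (nhds 1) (nhds (-Real.log 1)) :=
      ((Real.continuousAt_log one_ne_zero).neg).tendsto
    have h2 := h.mono_left (nhdsWithin_le_nhds (s := Set.Iio (1:ℝ)))
    simpa using h2
  · filter_upwards [Ioo_mem_nhdsLT_of_mem (by constructor <;> norm_num : (1:ℝ) ∈ Set.Ioc 0 1)]
      with R hR
    have := Real.log_neg hR.1 hR.2
    simpa using this

/-- `S(R) := log((R-1)/log R)/log R` is strictly increasing on `(0,1)`, tends to `0`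
as `R → 0⁻`, tends to `1/2` as `R → 1⁻`, and satisfies `S(R) ∈ (0,1/2)` on `(0,1)`. -/
theorem chernoffS_properties :
    StrictMonoOn chernoffS (Set.Ioo (0 : ℝ) 1) ∧
    Filter.Tendsto chernoffS (nhdsWithin 0 (Set.Ioi (0 : ℝ))) (nhds 0) ∧
    Filter.Tendsto chernoffS (nhdsWithin 1 (Set.Iio (1 : ℝ))) (nhds (1 / 2)) ∧
    ∀ R ∈ Set.Ioo (0 : ℝ) 1, chernoffS R ∈ Set.Ioo (0 : ℝ) (1 / 2) := by
  refine ⟨?_, ?_, ?_, ?_⟩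
  · intro a ha b hb hab
    rw [chernoffS_eq ha.1 ha.2, chernoffS_eq hb.1 hb.2]
    have hlb : Real.log a < Real.log b := Real.log_lt_log ha.1 hab
    have hb0 : Real.log b < 0 := Real.log_neg hb.1 hb.2
    have ha0 : Real.log a < 0 := Real.log_neg ha.1 ha.2
    exact cF_strictAnti (by simp; linarith) (by simp; linarith) (by linarith)
  · have h := cF_tendsto_zero.comp cS_neg_log_tendsto_atTop
    refine h.congr' ?_
    filter_upwards [Ioo_mem_nhdsGT_of_mem (by constructor <;> norm_num : (0:ℝ) ∈ Set.Ico 0 1)]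
      with R hR
    exact (chernoffS_eq hR.1 hR.2).symm
  · have h := cF_tendsto_half.comp cS_neg_log_tendsto_one
    refine h.congr' ?_
    filter_upwards [Ioo_mem_nhdsLT_of_mem (by constructor <;> norm_num : (1:ℝ) ∈ Set.Ioc 0 1)]
      with R hR
    exact (chernoffS_eq hR.1 hR.2).symm
  · intro R hR
    rw [chernoffS_eq hR.1 hR.2]
    have ht : 0 < -Real.log R := by
      have := Real.log_neg hR.1 hR.2; linarith
    exact ⟨cF_pos ht, cF_lt_half ht⟩
end

section
/- Let 0 < λ0 < λ1. Then the function s ↦ C_s(λ0,λ1) = s·λ0 + (1−s)·λ1 − λ0^s λ1^{1−s} attains its maximum over [0,1] at a unique point s*, and s* ∈ (0, 1/2). Consequently, C_s(λ0,λ1) is strictly decreasing in s on the interval [1/2, 1]. -/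
/-- The Chernoff `s`-divergence between Poisson distributions with rates `l0` and `l1`. -/
noncomputable def chernoffPoisson (l0 l1 s : ℝ) : ℝ :=
  s * l0 + (1 - s) * l1 - l0 ^ s * l1 ^ (1 - s)

private lemma aux_log_lt (u : ℝ) (hu : 1 < u) : Real.log u < (u - 1/u) / 2 := by
  set h : ℝ → ℝ := fun x => (x - x⁻¹) / 2 - Real.log x with hh
  have hderiv : ∀ x : ℝ, x ≠ 0 → HasDerivAt h ((1 - -(x ^ 2)⁻¹) / 2 - x⁻¹) x := by
    intro x hx
    exact (((hasDerivAt_id x).sub (hasDerivAt_inv hx)).div_const 2).sub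
      (Real.hasDerivAt_log hx)
  have hmono : StrictMonoOn h (Set.Ici 1) := by
    apply strictMonoOn_of_deriv_pos (convex_Ici 1)
    · intro x hx
      have hx0 : x ≠ 0 := by simp only [Set.mem_Ici] at hx; linarith
      exact (hderiv x hx0).continuousAt.continuousWithinAt
    · intro x hx
      rw [interior_Ici] at hx
      have hx1 : 1 < x := hx
      have hx0 : x ≠ 0 := by linarith
      rw [(hderiv x hx0).deriv]
      have e : (1 - -(x ^ 2)⁻¹) / 2 - x⁻¹ = (x - 1) ^ 2 / (2 * x ^ 2) := by
        field_simp
        ring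
      rw [e]
      have hne : x - 1 ≠ 0 := by linarith
      have h1 : (0:ℝ) < (x - 1) ^ 2 := by positivity
      have h2 : (0:ℝ) < 2 * x ^ 2 := by positivity
      exact div_pos h1 h2
  have h1 : h 1 = 0 := by simp [hh]
  have h2 := hmono Set.self_mem_Ici (Set.mem_Ici.mpr hu.le) hu
  rw [h1] at h2
  have h3 : 0 < (u - u⁻¹) / 2 - Real.log u := h2
  rw [one_div]
  linarith

/-- For `0 < l0 < l1`, the map `s ↦ C_s(l0,l1)` attains its maximum over `[0,1]` at a
unique point `s*`, which lies in `(0,1/2)`; consequently `s ↦ C_s(l0,l1)` is strictly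
decreasing on `[1/2,1]`. -/
theorem chernoff_poisson_unique_maximizer (l0 l1 : ℝ) (h0 : 0 < l0) (h01 : l0 < l1) :
    (∃ sStar ∈ Set.Ioo (0 : ℝ) (1 / 2),
      (∀ t ∈ Set.Icc (0 : ℝ) 1, chernoffPoisson l0 l1 t ≤ chernoffPoisson l0 l1 sStar) ∧
      (∀ t ∈ Set.Icc (0 : ℝ) 1,
        (∀ u ∈ Set.Icc (0 : ℝ) 1, chernoffPoisson l0 l1 u ≤ chernoffPoisson l0 l1 t) →
          t = sStar)) ∧
    StrictAntiOn (fun s => chernoffPoisson l0 l1 s) (Set.Icc (1 / 2 : ℝ) 1) := by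
  have hl1 : (0:ℝ) < l1 := h0.trans h01
  set A := Real.log l0 with hA
  set B := Real.log l1 with hB
  have hAB : A < B := Real.log_lt_log h0 h01
  set φ : ℝ → ℝ := fun s => l0 - l1 + Real.exp (B + s * (A - B)) * (B - A) with hφdef
  -- rewrite chernoffPoisson via exp
  have hFeq : chernoffPoisson l0 l1 = fun s => s * l0 + (1 - s) * l1 - Real.exp (B + s * (A - B)) := by
    funext s
    unfold chernoffPoisson
    rw [Real.rpow_def_of_pos h0, Real.rpow_def_of_pos hl1, ← Real.exp_add, ← hA, ← hB]
    ring_nf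
  -- derivative
  have hderiv : ∀ s : ℝ, HasDerivAt (chernoffPoisson l0 l1) (φ s) s := by
    intro s
    rw [hFeq]
    have hexp : HasDerivAt (fun s : ℝ => Real.exp (B + s * (A - B)))
        (Real.exp (B + s * (A - B)) * (A - B)) s := by
      have hlin : HasDerivAt (fun s : ℝ => B + s * (A - B)) (A - B) s := by
        simpa using ((hasDerivAt_id s).mul_const (A - B)).const_add B
      exact hlin.exp
    have hlin2 : HasDerivAt (fun s : ℝ => s * l0 + (1 - s) * l1) (l0 - l1) s := by
      have h1 := (hasDerivAt_id s).mul_const l0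
      have h2 := ((hasDerivAt_const s (1:ℝ)).sub (hasDerivAt_id s)).mul_const l1
      have h3 := h1.add h2
      exact h3.congr_deriv (by ring)
    have h4 := hlin2.sub hexp
    exact h4.congr_deriv (by simp only [hφdef]; ring)
  -- φ is strictly decreasing
  have hφanti : ∀ s t : ℝ, s < t → φ t < φ s := by
    intro s t hst
    simp only [hφdef]
    have harg : B + t * (A - B) < B + s * (A - B) := by nlinarith
    have hexp := Real.exp_lt_exp.mpr harg
    have hBA : (0:ℝ) < B - A := by linarith
    nlinarith [mul_lt_mul_of_pos_right hexp hBA]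
  -- φ 0 > 0
  have hφ0 : 0 < φ 0 := by
    have hne : l0 / l1 ≠ 1 := by
      intro hh
      rw [div_eq_one_iff_eq hl1.ne'] at hh
      linarith
    have h := Real.log_lt_sub_one_of_pos (div_pos h0 hl1) hne
    rw [Real.log_div h0.ne' hl1.ne'] at h
    have h2 : (A - B) * l1 < (l0 / l1 - 1) * l1 := mul_lt_mul_of_pos_right h hl1
    rw [sub_mul, sub_mul, div_mul_cancel₀ _ hl1.ne', one_mul] at h2
    simp only [hφdef, zero_mul, add_zero]
    rw [hB, Real.exp_log hl1]
    nlinarith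
  -- φ (1/2) < 0
  have hφhalf : φ (1/2) < 0 := by
    set u := Real.exp ((B - A) / 2) with hu
    have hu1 : 1 < u := by
      rw [hu]
      have : (0:ℝ) < (B - A) / 2 := by linarith
      calc (1:ℝ) = Real.exp 0 := by simp
        _ < Real.exp ((B - A) / 2) := Real.exp_lt_exp.mpr this
    have h := aux_log_lt u hu1
    rw [hu, Real.log_exp] at h
    have hinv : 1 / u = Real.exp ((A - B) / 2) := by
      rw [hu, one_div, ← Real.exp_neg]
      congr 1
      ring
    rw [hinv] at h
    -- (B - A)/2 < (exp((B-A)/2) - exp((A-B)/2)) / 2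
    have h2 : B - A < Real.exp ((B - A) / 2) - Real.exp ((A - B) / 2) := by linarith
    have h3 := mul_lt_mul_of_pos_left h2 (Real.exp_pos ((A + B) / 2))
    have e1 : Real.exp ((A + B) / 2) * Real.exp ((B - A) / 2) = l1 := by
      rw [← Real.exp_add, show (A + B) / 2 + (B - A) / 2 = B by ring, hB, Real.exp_log hl1]
    have e2 : Real.exp ((A + B) / 2) * Real.exp ((A - B) / 2) = l0 := by
      rw [← Real.exp_add, show (A + B) / 2 + (A - B) / 2 = A by ring, hA, Real.exp_log h0]
    have h4 : Real.exp ((A + B) / 2) * (B - A) < l1 - l0 := by nlinarith [h3, e1, e2]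
    have e3 : B + (1/2 : ℝ) * (A - B) = (A + B) / 2 := by ring
    simp only [hφdef]
    rw [e3]
    linarith
  -- existence of root of φ in (0, 1/2)
  have hφcont : ContinuousOn φ (Set.Icc (0:ℝ) (1/2)) := by
    apply Continuous.continuousOn
    simp only [hφdef]
    continuity
  obtain ⟨sStar, hsmem, hsval⟩ : ∃ s ∈ Set.Ioo (0:ℝ) (1/2), φ s = 0 := by
    have h := intermediate_value_Ioo' (by norm_num : (0:ℝ) ≤ 1/2) hφcont
    obtain ⟨s, hs, hval⟩ := h ⟨hφhalf, hφ0⟩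
    exact ⟨s, hs, hval⟩
  have hd : ∀ s : ℝ, deriv (chernoffPoisson l0 l1) s = φ s := fun s => (hderiv s).deriv
  have hcont : Continuous (chernoffPoisson l0 l1) := by
    have : Differentiable ℝ (chernoffPoisson l0 l1) := fun s => (hderiv s).differentiableAt
    exact this.continuous
  have hs1 : sStar ≤ 1 := by
    have := hsmem.2
    linarith
  -- strict monotone on [0, sStar]
  have hmono : StrictMonoOn (chernoffPoisson l0 l1) (Set.Icc 0 sStar) := by
    apply strictMonoOn_of_deriv_pos (convex_Icc _ _) hcont.continuousOn
    intro x hx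
    rw [interior_Icc] at hx
    rw [hd]
    have := hφanti x sStar hx.2
    rw [hsval] at this
    linarith
  -- strict anti on [sStar, 1]
  have hanti : StrictAntiOn (chernoffPoisson l0 l1) (Set.Icc sStar 1) := by
    apply strictAntiOn_of_deriv_neg (convex_Icc _ _) hcont.continuousOn
    intro x hx
    rw [interior_Icc] at hx
    rw [hd]
    have := hφanti sStar x hx.1
    rw [hsval] at this
    linarith
  have hmax : ∀ t ∈ Set.Icc (0:ℝ) 1, chernoffPoisson l0 l1 t ≤ chernoffPoisson l0 l1 sStar := by
    intro t ht
    rcases le_or_gt t sStar with h | h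
    · exact hmono.monotoneOn ⟨ht.1, h⟩ ⟨hsmem.1.le, le_rfl⟩ h
    · exact hanti.antitoneOn ⟨le_rfl, hs1⟩ ⟨h.le, ht.2⟩ h.le
  refine ⟨⟨sStar, hsmem, hmax, ?_⟩, ?_⟩
  · intro t ht htmax
    by_contra hne
    rcases lt_or_gt_of_ne hne with h | h
    · have h1 : chernoffPoisson l0 l1 t < chernoffPoisson l0 l1 sStar :=
        hmono ⟨ht.1, h.le⟩ ⟨hsmem.1.le, le_rfl⟩ h
      have h2 := htmax sStar ⟨hsmem.1.le, hs1⟩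
      linarith
    · have h1 : chernoffPoisson l0 l1 t < chernoffPoisson l0 l1 sStar :=
        hanti ⟨le_rfl, hs1⟩ ⟨h.le, ht.2⟩ h
      have h2 := htmax sStar ⟨hsmem.1.le, hs1⟩
      linarith
  · exact hanti.mono (Set.Icc_subset_Icc hsmem.2.le le_rfl)
end
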